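/- Let G be a finite simple graph, d ≥ 1 an integer, u a vertex of G, and let H be obtained from G by attaching a pendant clique C of r ≥ 2d+1 vertices to u. Then no edge of H with at least one endpoint in C belongs to the edge cut of any d-cut of H. -/
import Mathlib


variable {V : Type*}

/-- A `d`-cut of a simple graph `G`: a partition `(A, B)` of the vertex set into two
nonempty parts such that every vertex of `A` has at most `d` neighbors in `B` and
every vertex of `B` has at most `d` neighbors in `A`. -/
def IsDCut (G : SimpleGraph V) (d : ℕ) (A B : Set V) : Prop :=
  A.Nonempty ∧ B.Nonempty ∧ Disjoint A B ∧ A ∪ B = Set.univ ∧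
    (∀ v ∈ A, (G.neighborSet v ∩ B).ncard ≤ d) ∧
    (∀ v ∈ B, (G.neighborSet v ∩ A).ncard ≤ d)

/-- A vertex set `T` is monochromatic if every `d`-cut of `G` has `T` entirely on one side. -/
def Monochromatic (G : SimpleGraph V) (d : ℕ) (T : Set V) : Prop :=
  ∀ A B : Set V, IsDCut G d A B → T ⊆ A ∨ T ⊆ B

/-- The edge cut of a cut `(A, B)`: the set of edges of `G` with one endpoint in `A`
and the other endpoint in `B`. -/
def edgeCut (G : SimpleGraph V) (A B : Set V) : Set (Sym2 V) :=
  {e | e ∈ G.edgeSet ∧ ∃ u v, e = s(u, v) ∧ u ∈ A ∧ v ∈ B}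

/-- A minimal `d`-cut: no `d`-cut has an edge cut that is a proper subset of its edge cut. -/
def IsMinimalDCut (G : SimpleGraph V) (d : ℕ) (A B : Set V) : Prop :=
  IsDCut G d A B ∧ ∀ A' B' : Set V, IsDCut G d A' B' → ¬ edgeCut G A' B' ⊂ edgeCut G A B

/-- A maximal `d`-cut: no `d`-cut has an edge cut that properly contains its edge cut. -/
def IsMaximalDCut (G : SimpleGraph V) (d : ℕ) (A B : Set V) : Prop :=
  IsDCut G d A B ∧ ∀ A' B' : Set V, IsDCut G d A' B' → ¬ edgeCut G A B ⊂ edgeCut G A' B'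

/-- The graph obtained from `G` by attaching a pendant clique of `r` new vertices to `u`:
the `r` new vertices are pairwise adjacent, each of them is adjacent to `u`, and no
other edges are added. -/
def attachPendantClique (G : SimpleGraph V) (u : V) (r : ℕ) :
    SimpleGraph (V ⊕ Fin r) :=
  SimpleGraph.fromRel (fun a b =>
    (∃ x y : V, a = Sum.inl x ∧ b = Sum.inl y ∧ G.Adj x y) ∨
    (∃ c : Fin r, a = Sum.inl u ∧ b = Sum.inr c) ∨
    (∃ c c' : Fin r, a = Sum.inr c ∧ b = Sum.inr c'))


section Helpers
variable [Fintype V] (G : SimpleGraph V) (u : V) (r : ℕ)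

lemma apc_adj_inr_inr {c c' : Fin r} (h : c ≠ c') :
    (attachPendantClique G u r).Adj (Sum.inr c) (Sum.inr c') := by
  refine ⟨by simpa using h, Or.inl (Or.inr (Or.inr ⟨c, c', rfl, rfl⟩))⟩

lemma apc_adj_u_inr (c : Fin r) :
    (attachPendantClique G u r).Adj (Sum.inl u) (Sum.inr c) := by
  refine ⟨by simp, Or.inl (Or.inr (Or.inl ⟨c, rfl, rfl⟩))⟩

lemma apc_nbr_inr {c : Fin r} {w : V ⊕ Fin r}
    (h : (attachPendantClique G u r).Adj (Sum.inr c) w) :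
    w = Sum.inl u ∨ ∃ c' : Fin r, w = Sum.inr c' := by
  obtain ⟨hne, h | h⟩ := h
  · rcases h with ⟨x, y, hx, _⟩ | ⟨c', hx, _⟩ | ⟨c1, c2, hx, hy⟩
    · exact absurd hx (by simp)
    · exact absurd hx (by simp)
    · exact Or.inr ⟨c2, hy⟩
  · rcases h with ⟨x, y, _, hy, _⟩ | ⟨c', hx, _⟩ | ⟨c1, c2, hx, hy⟩
    · exact absurd hy (by simp)
    · exact Or.inl hx
    · exact Or.inr ⟨c1, hx⟩

lemma apc_clique_one_side (d : ℕ) (hr : 2 * d + 1 ≤ r)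
    {A B : Set (V ⊕ Fin r)} (hAB : IsDCut (attachPendantClique G u r) d A B) :
    (∀ c : Fin r, Sum.inr c ∈ A) ∨ (∀ c : Fin r, Sum.inr c ∈ B) := by
  obtain ⟨hA, hB, hdisj, huniv, hAd, hBd⟩ := hAB
  by_contra hcon
  push_neg at hcon
  obtain ⟨⟨c1, hc1⟩, ⟨c2, hc2⟩⟩ := hcon
  have hmem : ∀ v : V ⊕ Fin r, v ∈ A ∨ v ∈ B := by
    intro v
    have := Set.mem_univ v
    rw [← huniv] at this
    exact this
  have hc1B : Sum.inr c1 ∈ B := (hmem _).resolve_left hc1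
  have hc2A : Sum.inr c2 ∈ A := (hmem _).resolve_right hc2
  set SA : Set (Fin r) := {c | Sum.inr c ∈ A} with hSA
  set SB : Set (Fin r) := {c | Sum.inr c ∈ B} with hSB
  have hsub1 : Sum.inr '' SB ⊆
      (attachPendantClique G u r).neighborSet (Sum.inr c2) ∩ B := by
    rintro _ ⟨c', hc', rfl⟩
    have hne : c2 ≠ c' := by
      rintro rfl
      exact absurd hc2A (Set.disjoint_right.mp hdisj hc')
    exact ⟨apc_adj_inr_inr G u r hne, hc'⟩
  have hsub2 : Sum.inr '' SA ⊆
      (attachPendantClique G u r).neighborSet (Sum.inr c1) ∩ A := by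
    rintro _ ⟨c', hc', rfl⟩
    have hne : c1 ≠ c' := by
      rintro rfl
      exact absurd hc1B (Set.disjoint_left.mp hdisj hc')
    exact ⟨apc_adj_inr_inr G u r hne, hc'⟩
  have hB_le : SB.ncard ≤ d := by
    calc SB.ncard = (Sum.inr '' SB : Set (V ⊕ Fin r)).ncard :=
          (Set.ncard_image_of_injective _ Sum.inr_injective).symm
      _ ≤ ((attachPendantClique G u r).neighborSet (Sum.inr c2) ∩ B).ncard :=
          Set.ncard_le_ncard hsub1 (Set.toFinite _)
      _ ≤ d := hAd _ hc2A
  have hA_le : SA.ncard ≤ d := by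
    calc SA.ncard = (Sum.inr '' SA : Set (V ⊕ Fin r)).ncard :=
          (Set.ncard_image_of_injective _ Sum.inr_injective).symm
      _ ≤ ((attachPendantClique G u r).neighborSet (Sum.inr c1) ∩ A).ncard :=
          Set.ncard_le_ncard hsub2 (Set.toFinite _)
      _ ≤ d := hBd _ hc1B
  have hUnion : SA ∪ SB = Set.univ := by
    ext c
    simp only [Set.mem_union, Set.mem_univ, iff_true, hSA, hSB, Set.mem_setOf_eq]
    exact hmem _
  have hcard : r ≤ SA.ncard + SB.ncard := by
    have h1 : (SA ∪ SB).ncard ≤ SA.ncard + SB.ncard := Set.ncard_union_le _ _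
    rw [hUnion] at h1
    simpa [Set.ncard_univ] using h1
  omega

lemma apc_all_one_side (d : ℕ) (hd : 1 ≤ d) (hr : 2 * d + 1 ≤ r)
    {A B : Set (V ⊕ Fin r)} (hAB : IsDCut (attachPendantClique G u r) d A B) :
    ((∀ c : Fin r, Sum.inr c ∈ A) ∧ Sum.inl u ∈ A) ∨
    ((∀ c : Fin r, Sum.inr c ∈ B) ∧ Sum.inl u ∈ B) := by
  obtain hCA | hCB := apc_clique_one_side G u r d hr hAB
  · left
    refine ⟨hCA, ?_⟩
    obtain ⟨hA, hB, hdisj, huniv, hAd, hBd⟩ := hAB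
    by_contra huB
    have huB' : Sum.inl u ∈ B := by
      have := Set.mem_univ (Sum.inl u : V ⊕ Fin r)
      rw [← huniv] at this
      exact this.resolve_left huB
    have hsub : (Sum.inr '' (Set.univ : Set (Fin r)) : Set (V ⊕ Fin r)) ⊆
        (attachPendantClique G u r).neighborSet (Sum.inl u) ∩ A := by
      rintro _ ⟨c, -, rfl⟩
      exact ⟨apc_adj_u_inr G u r c, hCA c⟩
    have := hBd _ huB'
    have hcard : r ≤ ((attachPendantClique G u r).neighborSet (Sum.inl u) ∩ A).ncard := by
      have h1 := Set.ncard_le_ncard hsub (Set.toFinite _)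
      rw [Set.ncard_image_of_injective _ Sum.inr_injective] at h1
      simpa [Set.ncard_univ] using h1
    omega
  · right
    refine ⟨hCB, ?_⟩
    obtain ⟨hA, hB, hdisj, huniv, hAd, hBd⟩ := hAB
    by_contra huA
    have huA' : Sum.inl u ∈ A := by
      have := Set.mem_univ (Sum.inl u : V ⊕ Fin r)
      rw [← huniv] at this
      exact this.resolve_right huA
    have hsub : (Sum.inr '' (Set.univ : Set (Fin r)) : Set (V ⊕ Fin r)) ⊆
        (attachPendantClique G u r).neighborSet (Sum.inl u) ∩ B := by
      rintro _ ⟨c, -, rfl⟩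
      exact ⟨apc_adj_u_inr G u r c, hCB c⟩
    have := hAd _ huA'
    have hcard : r ≤ ((attachPendantClique G u r).neighborSet (Sum.inl u) ∩ B).ncard := by
      have h1 := Set.ncard_le_ncard hsub (Set.toFinite _)
      rw [Set.ncard_image_of_injective _ Sum.inr_injective] at h1
      simpa [Set.ncard_univ] using h1
    omega

end Helpers

/-- If a pendant clique `C` of `r ≥ 2d+1` vertices is attached to `u`, then no edge with
an endpoint in `C` belongs to the edge cut of any `d`-cut of the resulting graph. -/
theorem pendantClique_edges_not_in_cut [Fintype V] (G : SimpleGraph V) (d : ℕ)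
    (hd : 1 ≤ d) (u : V) (r : ℕ) (hr : 2 * d + 1 ≤ r)
    (A B : Set (V ⊕ Fin r)) (hAB : IsDCut (attachPendantClique G u r) d A B) :
    ∀ e ∈ edgeCut (attachPendantClique G u r) A B, ∀ c : Fin r, Sum.inr c ∉ e := by
  intro e he c hc
  obtain ⟨heE, p, q, rfl, hpA, hqB⟩ := he
  have hdisj := hAB.2.2.1
  have hadj : (attachPendantClique G u r).Adj p q := heE
  obtain ⟨hall, hu⟩ | ⟨hall, hu⟩ := apc_all_one_side G u r d hd hr hAB
  · -- everything in A
    rcases Sym2.mem_iff.mp hc with rfl | rfl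
    · -- p = inr c, q is a neighbor of inr c, hence in A, but q ∈ B
      have hq : q ∈ A := by
        rcases apc_nbr_inr G u r hadj with rfl | ⟨c', rfl⟩
        · exact hu
        · exact hall c'
      exact Set.disjoint_left.mp hdisj hq hqB
    · exact Set.disjoint_left.mp hdisj (hall c) hqB
  · rcases Sym2.mem_iff.mp hc with rfl | rfl
    · exact Set.disjoint_left.mp hdisj hpA (hall c)
    · have hp : p ∈ B := by
        rcases apc_nbr_inr G u r hadj.symm with rfl | ⟨c', rfl⟩
        · exact hu
        · exact hall c'
      exact Set.disjoint_left.mp hdisj hpA hp
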